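/- Let α ∈ (0,1) and let τ⋆(x) := Q_{1−α}(P_{V|X=x}) be measurable. Define the rectified score Ṽ(x,y) := V(x,y) − τ⋆(x) and let Ṽ := Ṽ(X,Y). Then Q_{1−α}(P_{Ṽ}) = 0 and, for P_X-almost every x ∈ 𝒳, Q_{1−α}(P_{Ṽ|X=x}) = 0; in particular the marginal and conditional (1−α)-quantiles of the rectified score coincide. -/

import Mathlib

open MeasureTheory ProbabilityTheory Filter Topology

section QuantileAux

/-- The `β`-quantile of a probability measure `P` on `ℝ`:
`Q_β(P) = inf {t : P((-∞, t]) ≥ β}`. -/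
noncomputable def quantile (P : Measure ℝ) (β : ℝ) : ℝ :=
  sInf {t : ℝ | ENNReal.ofReal β ≤ P (Set.Iic t)}

variable {P : Measure ℝ} [IsProbabilityMeasure P] {β : ℝ}

lemma quantile_set_nonempty (hβ1 : β < 1) :
    {t : ℝ | ENNReal.ofReal β ≤ P (Set.Iic t)}.Nonempty := by
  have h := tendsto_measure_Iic_atTop P
  rw [measure_univ] at h
  have hβ : ENNReal.ofReal β < 1 := ENNReal.ofReal_lt_one.mpr hβ1
  obtain ⟨t, ht⟩ := (h.eventually (Ioi_mem_nhds hβ)).exists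
  exact ⟨t, le_of_lt ht⟩

lemma quantile_set_bddBelow (hβ0 : 0 < β) :
    BddBelow {t : ℝ | ENNReal.ofReal β ≤ P (Set.Iic t)} := by
  have hIempty : (⋂ n : ℕ, Set.Iic (-(n : ℝ))) = ∅ := by
    rw [Set.eq_empty_iff_forall_notMem]
    intro x hx
    simp only [Set.mem_iInter, Set.mem_Iic] at hx
    obtain ⟨n, hn⟩ := exists_nat_gt (-x)
    have := hx n
    linarith
  have htend : Tendsto (fun n : ℕ => P (Set.Iic (-(n : ℝ)))) atTop (𝓝 0) := by
    have h := tendsto_measure_iInter_atTop (μ := P) (s := fun n : ℕ => Set.Iic (-(n : ℝ)))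
      (fun n => measurableSet_Iic.nullMeasurableSet)
      (fun i j hij => Set.Iic_subset_Iic.mpr (by exact_mod_cast neg_le_neg (Nat.cast_le.mpr hij)))
      ⟨0, measure_ne_top _ _⟩
    rw [hIempty, measure_empty] at h
    simpa [Function.comp_def] using h
  have hpos : (0 : ENNReal) < ENNReal.ofReal β := ENNReal.ofReal_pos.mpr hβ0
  obtain ⟨n, hn⟩ := (htend.eventually (Iio_mem_nhds hpos)).exists
  refine ⟨-(n : ℝ), fun t ht => ?_⟩
  by_contra h
  push_neg at h
  exact absurd (le_trans ht (measure_mono (Set.Iic_subset_Iic.mpr h.le))) hn.not_ge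

lemma ofReal_le_measure_Iic_quantile (hβ0 : 0 < β) (hβ1 : β < 1) :
    ENNReal.ofReal β ≤ P (Set.Iic (quantile P β)) := by
  set S := {t : ℝ | ENNReal.ofReal β ≤ P (Set.Iic t)} with hS
  have hne : S.Nonempty := quantile_set_nonempty hβ1
  have hbdd : BddBelow S := quantile_set_bddBelow hβ0
  have hmem : ∀ n : ℕ, ENNReal.ofReal β ≤ P (Set.Iic (sInf S + 1 / (n + 1))) := by
    intro n
    have hlt : sInf S < sInf S + 1 / (n + 1) := by
      have : (0 : ℝ) < 1 / (n + 1) := by positivity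
      linarith
    obtain ⟨s, hsS, hs⟩ := (csInf_lt_iff hbdd hne).mp hlt
    exact le_trans hsS (measure_mono (Set.Iic_subset_Iic.mpr hs.le))
  have hint : Set.Iic (sInf S) = ⋂ n : ℕ, Set.Iic (sInf S + 1 / (n + 1)) := by
    ext v
    simp only [Set.mem_Iic, Set.mem_iInter]
    constructor
    · intro h n
      have : (0 : ℝ) < 1 / (n + 1) := by positivity
      linarith
    · intro h
      by_contra hv
      push_neg at hv
      obtain ⟨n, hn⟩ := exists_nat_one_div_lt (sub_pos.mpr hv)
      have := h n
      have hcast : (1 : ℝ) / (n + 1) = 1 / ((n : ℝ) + 1) := by norm_num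
      linarith
  have htend : Tendsto (fun n : ℕ => P (Set.Iic (sInf S + 1 / (n + 1)))) atTop
      (𝓝 (P (Set.Iic (sInf S)))) := by
    rw [hint]
    have h := tendsto_measure_iInter_atTop (μ := P)
      (s := fun n : ℕ => Set.Iic (sInf S + 1 / (n + 1)))
      (fun n => measurableSet_Iic.nullMeasurableSet) ?_ ⟨0, measure_ne_top _ _⟩
    · simpa [Function.comp_def] using h
    intro i j hij
    refine Set.Iic_subset_Iic.mpr ?_
    have : (1 : ℝ) / (j + 1) ≤ 1 / (i + 1) := by
      gcongr
    linarith
  exact ge_of_tendsto' htend hmem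

lemma measure_Iic_lt_of_lt_quantile (hβ0 : 0 < β) {t : ℝ} (ht : t < quantile P β) :
    P (Set.Iic t) < ENNReal.ofReal β := by
  by_contra h
  push_neg at h
  exact absurd (csInf_le (quantile_set_bddBelow hβ0) h) (not_le.mpr ht)

lemma quantile_map_sub_const (hβ0 : 0 < β) (hβ1 : β < 1) (c : ℝ) :
    quantile (P.map (fun v => v - c)) β = quantile P β - c := by
  have hmeas : Measurable fun v : ℝ => v - c := measurable_id.sub_const c
  have hset : ∀ t : ℝ, (P.map (fun v => v - c)) (Set.Iic t) = P (Set.Iic (t + c)) := by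
    intro t
    rw [Measure.map_apply hmeas measurableSet_Iic]
    congr 1
    ext v
    simp [sub_le_iff_le_add]
  unfold quantile
  simp_rw [hset]
  apply le_antisymm
  · apply csInf_le
    · obtain ⟨b, hb⟩ := quantile_set_bddBelow (P := P) hβ0
      refine ⟨b - c, fun t ht => ?_⟩
      have := hb ht
      linarith
    · show ENNReal.ofReal β ≤ P (Set.Iic (quantile P β - c + c))
      rw [sub_add_cancel]
      exact ofReal_le_measure_Iic_quantile hβ0 hβ1
  · apply le_csInf
    · obtain ⟨s, hs⟩ := quantile_set_nonempty (P := P) hβ1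
      exact ⟨s - c, by simpa [sub_add_cancel] using hs⟩
    · intro t ht
      have h2 : sInf {t : ℝ | ENNReal.ofReal β ≤ P (Set.Iic t)} ≤ t + c :=
        csInf_le (quantile_set_bddBelow hβ0) ht
      linarith

lemma quantile_eq_zero_of (h0 : ENNReal.ofReal β ≤ P (Set.Iic 0))
    (hneg : ∀ t < (0 : ℝ), P (Set.Iic t) < ENNReal.ofReal β) :
    quantile P β = 0 := by
  have hlb : ∀ t ∈ {t : ℝ | ENNReal.ofReal β ≤ P (Set.Iic t)}, (0 : ℝ) ≤ t := by
    intro t ht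
    by_contra h
    push_neg at h
    exact absurd ht (not_le.mpr (hneg t h))
  unfold quantile
  exact le_antisymm (csInf_le ⟨0, hlb⟩ h0) (le_csInf ⟨0, h0⟩ hlb)

end QuantileAux

section ShiftKernel

open ProbabilityTheory

variable {γ : Type*} [MeasurableSpace γ]

/-- The kernel `x ↦ (κ x).map (· - τ x)`. -/
noncomputable def shiftKernel (κ : Kernel γ ℝ) [IsSFiniteKernel κ] (τ : γ → ℝ)
    (hτ : Measurable τ) : Kernel γ ℝ where
  toFun x := (κ x).map (fun v => v - τ x)
  measurable' := by
    refine Measure.measurable_of_measurable_coe _ fun s hs => ?_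
    have h1 : ∀ x, (κ x).map (fun v => v - τ x) s = κ x {v | v - τ x ∈ s} := fun x =>
      Measure.map_apply (measurable_id.sub_const _) hs
    simp_rw [h1]
    have hT : MeasurableSet {q : γ × ℝ | q.2 - τ q.1 ∈ s} :=
      (measurable_snd.sub (hτ.comp measurable_fst)) hs
    have h2 := Kernel.measurable_kernel_prodMk_left (κ := κ) hT
    exact h2

lemma shiftKernel_apply (κ : Kernel γ ℝ) [IsSFiniteKernel κ] (τ : γ → ℝ) (hτ : Measurable τ)
    (x : γ) : shiftKernel κ τ hτ x = (κ x).map (fun v => v - τ x) := rfl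

instance (κ : Kernel γ ℝ) [IsMarkovKernel κ] (τ : γ → ℝ) (hτ : Measurable τ) :
    IsMarkovKernel (shiftKernel κ τ hτ) :=
  ⟨fun x => by
    rw [shiftKernel_apply]
    exact Measure.isProbabilityMeasure_map (measurable_id.sub_const _).aemeasurable⟩

lemma map_shift_eq_compProd (ν : Measure γ) [SFinite ν] (κ : Kernel γ ℝ) [IsMarkovKernel κ]
    (τ : γ → ℝ) (hτ : Measurable τ) :
    (ν ⊗ₘ κ).map (fun q : γ × ℝ => (q.1, q.2 - τ q.1)) = ν ⊗ₘ shiftKernel κ τ hτ := by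
  have hg : Measurable fun q : γ × ℝ => (q.1, q.2 - τ q.1) :=
    measurable_fst.prodMk (measurable_snd.sub (hτ.comp measurable_fst))
  ext s hs
  rw [Measure.map_apply hg hs, Measure.compProd_apply (hg hs), Measure.compProd_apply hs]
  refine lintegral_congr fun x => ?_
  rw [shiftKernel_apply, Measure.map_apply (f := fun v => v - τ x) (μ := κ x)
    (measurable_id.sub_const _) (measurable_prodMk_left hs)]
  rfl

end ShiftKernel

/-- For the additively rectified score
`Ṽ(x,y) = V(x,y) − τ⋆(x)` with `τ⋆(x) = Q_{1-α}(P_{V|X=x})`, the marginal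
`(1-α)`-quantile of `Ṽ(X,Y)` equals `0`, and for `P_X`-a.e. `x` the conditional
`(1-α)`-quantile of `Ṽ(X,Y)` given `X = x` also equals `0`. -/
theorem rectified_score_additive_quantile
    {Ω : Type*} [MeasurableSpace Ω]
    (μ : Measure Ω) [IsProbabilityMeasure μ]
    {p d : ℕ}
    (X : Ω → (Fin p → ℝ)) (Y : Ω → (Fin d → ℝ))
    (hX : Measurable X) (hY : Measurable Y)
    (V : (Fin p → ℝ) → (Fin d → ℝ) → ℝ)
    (hV : Measurable (Function.uncurry V))
    (α : ℝ) (hα : α ∈ Set.Ioo (0 : ℝ) 1)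
    -- `τ⋆(x) = Q_{1-α}(P_{V | X = x})`, measurable
    (τstar : (Fin p → ℝ) → ℝ)
    (hτstar_def : ∀ x, τstar x =
      quantile (condDistrib (fun ω => V (X ω) (Y ω)) X μ x) (1 - α))
    (hτstar_meas : Measurable τstar) :
    quantile (μ.map (fun ω => V (X ω) (Y ω) - τstar (X ω))) (1 - α) = 0 ∧
    ∀ᵐ x ∂(μ.map X),
      quantile (condDistrib (fun ω => V (X ω) (Y ω) - τstar (X ω)) X μ x) (1 - α) = 0 := by
  obtain ⟨hα0, hα1⟩ := hα
  have hβ0 : (0 : ℝ) < 1 - α := by linarith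
  have hβ1 : 1 - α < 1 := by linarith
  have hW : Measurable fun ω => V (X ω) (Y ω) := hV.comp (hX.prodMk hY)
  set W : Ω → ℝ := fun ω => V (X ω) (Y ω) with hW_def
  set κ₀ := condDistrib W X μ with hκ₀
  set Vt : Ω → ℝ := fun ω => W ω - τstar (X ω) with hVt_def
  have hVt : Measurable Vt := hW.sub (hτstar_meas.comp hX)
  have hpair : Measurable fun ω => (X ω, W ω) := hX.prodMk hW
  have hprob : IsProbabilityMeasure (μ.map fun ω => (X ω, W ω)) :=
    Measure.isProbabilityMeasure_map hpair.aemeasurable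
  have hXprob : IsProbabilityMeasure (μ.map X) := Measure.isProbabilityMeasure_map hX.aemeasurable
  -- disintegration of the law of (X, W)
  have hdis : μ.map (fun ω => (X ω, W ω)) = μ.map X ⊗ₘ κ₀ := by
    have h1 : (μ.map fun ω => (X ω, W ω)).fst = μ.map X :=
      Measure.fst_map_prodMk₀ hW.aemeasurable
    conv_lhs => rw [← Measure.disintegrate (μ.map fun ω => (X ω, W ω)) (μ.map fun ω => (X ω, W ω)).condKernel]
    rw [h1, hκ₀, condDistrib]
  -- law of (X, Vt) as a compProd for the shifted kernel
  have hg : Measurable fun q : (Fin p → ℝ) × ℝ => (q.1, q.2 - τstar q.1) :=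
    measurable_fst.prodMk (measurable_snd.sub (hτstar_meas.comp measurable_fst))
  have hmap : μ.map (fun ω => (X ω, Vt ω)) = μ.map X ⊗ₘ shiftKernel κ₀ τstar hτstar_meas := by
    have h2 : μ.map (fun ω => (X ω, Vt ω)) =
        (μ.map (fun ω => (X ω, W ω))).map (fun q => (q.1, q.2 - τstar q.1)) := by
      rw [Measure.map_map hg hpair]
      congr 1
    rw [h2, hdis, map_shift_eq_compProd]
  have hae : ∀ᵐ x ∂μ.map X, shiftKernel κ₀ τstar hτstar_meas x = condDistrib Vt X μ x :=
    (condDistrib_ae_eq_of_measure_eq_compProd_of_measurable hX hVt hmap).symm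
  haveI : ∀ x, IsProbabilityMeasure (κ₀ x) := fun x => inferInstance
  -- conditional part
  have hcond : ∀ᵐ x ∂μ.map X, quantile (condDistrib Vt X μ x) (1 - α) = 0 := by
    filter_upwards [hae] with x hx
    rw [← hx, shiftKernel_apply, quantile_map_sub_const hβ0 hβ1, ← hτstar_def x, sub_self]
  -- marginal part
  have hmarg : ∀ t : ℝ, (μ.map Vt) (Set.Iic t)
      = ∫⁻ x, κ₀ x (Set.Iic (t + τstar x)) ∂(μ.map X) := by
    intro t
    have h1 : (μ.map Vt) (Set.Iic t)
        = (μ.map (fun ω => (X ω, Vt ω))) (Set.univ ×ˢ Set.Iic t) := by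
      rw [Measure.map_apply hVt measurableSet_Iic,
        Measure.map_apply (hX.prodMk hVt) (MeasurableSet.univ.prod measurableSet_Iic)]
      congr 1
      ext ω
      simp
    rw [h1, hmap, Measure.compProd_apply (MeasurableSet.univ.prod measurableSet_Iic)]
    refine lintegral_congr fun x => ?_
    have hpre : (Prod.mk x ⁻¹' (Set.univ ×ˢ Set.Iic t)) = Set.Iic t := by
      ext v; simp
    rw [hpre, shiftKernel_apply,
      Measure.map_apply (show Measurable fun v : ℝ => v - τstar x by fun_prop) measurableSet_Iic]
    congr 1
    ext v
    simp [sub_le_iff_le_add]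
  have h0 : ENNReal.ofReal (1 - α) ≤ (μ.map Vt) (Set.Iic 0) := by
    rw [hmarg 0]
    calc ENNReal.ofReal (1 - α) = ∫⁻ _, ENNReal.ofReal (1 - α) ∂(μ.map X) := by
          rw [lintegral_const, measure_univ, mul_one]
    _ ≤ ∫⁻ x, κ₀ x (Set.Iic (0 + τstar x)) ∂(μ.map X) := by
          refine lintegral_mono fun x => ?_
          rw [zero_add]
          have h := ofReal_le_measure_Iic_quantile (P := κ₀ x) hβ0 hβ1
          rwa [← hτstar_def x] at h
  have hneg : ∀ t < (0 : ℝ), (μ.map Vt) (Set.Iic t) < ENNReal.ofReal (1 - α) := by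
    intro t ht
    rw [hmarg t]
    set g : (Fin p → ℝ) → ENNReal := fun x => κ₀ x (Set.Iic (t + τstar x)) with hg_def
    have hglt : ∀ x, g x < ENNReal.ofReal (1 - α) := by
      intro x
      refine measure_Iic_lt_of_lt_quantile hβ0 ?_
      rw [← hτstar_def x]
      linarith
    have hgmeas : Measurable g := by
      have hT : MeasurableSet {q : (Fin p → ℝ) × ℝ | q.2 ∈ Set.Iic (t + τstar q.1)} := by
        simp only [Set.mem_Iic]
        exact measurableSet_le measurable_snd (measurable_const.add (hτstar_meas.comp measurable_fst))
      have h2 := Kernel.measurable_kernel_prodMk_left (κ := κ₀) hT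
      exact h2
    have hle : ∫⁻ x, g x ∂(μ.map X) ≤ ENNReal.ofReal (1 - α) := by
      calc ∫⁻ x, g x ∂(μ.map X) ≤ ∫⁻ _, ENNReal.ofReal (1 - α) ∂(μ.map X) :=
            lintegral_mono fun x => (hglt x).le
      _ = ENNReal.ofReal (1 - α) := by rw [lintegral_const, measure_univ, mul_one]
    rcases lt_or_eq_of_le hle with h | heq
    · exact h
    · exfalso
      have hfin : ∫⁻ x, g x ∂(μ.map X) ≠ ⊤ := by
        rw [heq]; exact ENNReal.ofReal_ne_top
      have hsub : ∫⁻ x, (ENNReal.ofReal (1 - α) - g x) ∂(μ.map X) = 0 := by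
        rw [lintegral_sub hgmeas hfin (ae_of_all _ fun x => (hglt x).le), heq,
          lintegral_const, measure_univ, mul_one, tsub_self]
      rw [lintegral_eq_zero_iff (show Measurable fun x => ENNReal.ofReal (1 - α) - g x from measurable_const.sub hgmeas)] at hsub
      have hne : (μ.map X) ≠ 0 := IsProbabilityMeasure.ne_zero _
      haveI : (ae (μ.map X)).NeBot := ae_neBot.mpr hne
      obtain ⟨x, hx⟩ := hsub.exists
      simp only [Pi.zero_apply] at hx
      have : ENNReal.ofReal (1 - α) ≤ g x := tsub_eq_zero_iff_le.mp hx
      exact absurd this (not_le.mpr (hglt x))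
  have hprobVt : IsProbabilityMeasure (μ.map Vt) := Measure.isProbabilityMeasure_map hVt.aemeasurable
  exact ⟨quantile_eq_zero_of h0 hneg, hcond⟩
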